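/- Let A be an associative algebra over F and a, x ∈ A. If x satisfies the q-Dolan/Grady relation a³x - [3]_q a²xa + [3]_q axa² - xa³ = (q² - q⁻²)²(xa - ax), then x ∈ A^{(1)}, i.e., (bad a)_2(x) = 0, and consequently for every r ≥ 1, (bad a)_{r+1}(x^r) = 0 (the higher order q-Dolan/Grady relations). -/

import Mathlib

open Finset

variable {F : Type*} [Field F] {A : Type*} [Ring A] [Algebra F A]

/-- The quantum adjoint map `ad_r a : x ↦ q^r a x - q^{-r} x a`. -/
noncomputable def qad (q : F) (a : A) (r : ℤ) (x : A) : A :=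
  q ^ r • (a * x) - q ^ (-r) • (x * a)

/-- `bad_m a` : the balanced version of `ad`. -/
noncomputable def bad (q : F) (a : A) : ℕ → A → A
  | 0, x => (q - q⁻¹)⁻¹ • qad q a 0 x
  | (m + 1), x =>
      (((q ^ (2 * (m + 1) : ℤ) - q ^ (-(2 * (m + 1)) : ℤ)) *
          (q ^ (2 * (m + 1) + 1 : ℤ) - q ^ (-(2 * (m + 1)) - 1 : ℤ)))⁻¹) •
        ((q ^ (2 * (m + 1) : ℤ) - q ^ (-(2 * (m + 1)) : ℤ)) ^ 2 • x +
          qad q a ((m : ℤ) + 1) (qad q a (-((m : ℤ) + 1)) x))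

/-- `(bad a)_m = bad_{m-1} a ∘ ⋯ ∘ bad_0 a`, with `(bad a)_0 = id`. -/
noncomputable def badProd (q : F) (a : A) : ℕ → A → A
  | 0 => id
  | (m + 1) => bad q a m ∘ badProd q a m

/-- `S_m = (bad a)_m ∘ (ad_m a) / (q^{2m} - q^{-2m})`, with `S_0 = id`. -/
noncomputable def Smap (q : F) (a : A) : ℕ → A → A
  | 0 => id
  | (m + 1) => fun x =>
      (q ^ (2 * (m + 1) : ℤ) - q ^ (-(2 * (m + 1)) : ℤ))⁻¹ •
        badProd q a (m + 1) (qad q a ((m : ℤ) + 1) x)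

/-- `S'_m = (bad a)_m ∘ (ad_{-m} a) / (q^{2m} - q^{-2m})`, with `S'_0 = id`. -/
noncomputable def Smap' (q : F) (a : A) : ℕ → A → A
  | 0 => id
  | (m + 1) => fun x =>
      (q ^ (2 * (m + 1) : ℤ) - q ^ (-(2 * (m + 1)) : ℤ))⁻¹ •
        badProd q a (m + 1) (qad q a (-((m : ℤ) + 1)) x)

/-! ### Auxiliary machinery: a denominator-free version of the `bad` maps. -/

/-- Scaled single step: `Tt c a = c^2 · (numerator of bad at parameter c)`. -/
noncomputable def Tt (c : F) (a y : A) : A :=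
  c^2 • (a^2*y + y*a^2) - (c*(c^2+1)) • (a*y*a) + ((c^2-1)^2) • y

/-- Scaled version of `badProd`. -/
noncomputable def Pt (q : F) (a : A) : ℕ → A → A
  | 0, y => y
  | 1, y => a*y - y*a
  | (m+2), y => Tt (q^(2*(m+1))) a (Pt q a (m+1) y)

/-- The transfer bilinear map discovered from the commutative ideal-membership identity. -/
noncomputable def Uh (q c : F) (a w z : A) : A :=
  (q^4 + (-2)*q^8 + (-2)*q^8*c^2 + q^12 + 4*q^12*c^2 + q^12*c^4 + (-2)*q^16*c^2 + (-2)*q^16*c^4 + q^20*c^4) • (w * z) +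
  (q^6 + q^8 + (-1)*q^10*c^2 + (-2)*q^12*c^2 + (-1)*q^14*c^2 + q^16*c^4 + q^18*c^4) • (w * z * a^2) +
  ((-1)*q^6 + (-2)*q^8 + q^8*c^2 + (-1)*q^10 + 2*q^10*c^2 + 2*q^12*c^2 + 2*q^14*c^2 + (-1)*q^14*c^4 + q^16*c^2 + (-2)*q^16*c^4 + (-1)*q^18*c^4) • (w * a * z * a) +
  (q^8 + q^10 + (-1)*q^10*c^2 + (-2)*q^12*c^2 + (-1)*q^14*c^2 + q^14*c^4 + q^16*c^4) • (w * a^2 * z) +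
  ((-1)*q^6*c + (-1)*q^8*c + q^10*c + q^12*c + q^12*c^3 + q^14*c^3 + (-1)*q^16*c^3 + (-1)*q^18*c^3) • (a * w * z * a) +
  (q^8*c + q^10*c + (-1)*q^10*c^3 + (-1)*q^12*c + (-1)*q^12*c^3 + (-1)*q^14*c + q^14*c^3 + q^16*c^3) • (a * w * a * z) +
  (q^8*c^2 + (-2)*q^12*c^2 + q^16*c^2) • (a^2 * w * z)

lemma Pt_two (q : F) (a y : A) : Pt q a 2 y = Tt (q^2) a (a*y - y*a) := rfl

lemma Tt_smul (c : F) (a : A) (s : F) (y : A) : Tt c a (s • y) = s • Tt c a y := by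
  simp only [Tt, smul_add, smul_sub, smul_smul, mul_smul_comm, smul_mul_assoc]
  match_scalars <;> ring

lemma Uh_zero (q c : F) (a z : A) : Uh q c a 0 z = 0 := by
  simp [Uh]

/-- Base case identity (from `F̃₂(λ,ρ) ≡ Ũ₀·(λ-μ) mod G`). -/
lemma eid1 (q : F) (a y z : A) :
    (q^4*(q^4-1)^2) • Pt q a 2 (y*z) =
      Uh q 1 a (a*y - y*a) z + (q^4*(q^4-1)^2) • (y * Pt q a 2 z) := by
  simp only [Pt_two, Tt, Uh]
  simp only [mul_add, add_mul, mul_sub, sub_mul, smul_add, smul_sub, smul_smul,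
    smul_mul_assoc, mul_smul_comm, pow_two, mul_assoc]
  match_scalars <;> ring

set_option maxHeartbeats 3000000 in
/-- Step identity (from `Ũ_{cq²}·T_{cq²}(λ,μ) ≡ T_{cq⁴}(λ,ρ)·Ũ_c mod G`). -/
lemma eid2 (q c : F) (a w z : A) :
    Uh q (q^2*c) a (Tt (q^2*c) a w) z =
      Tt (q^4*c) a (Uh q c a w z)
      + ((-1)*q^6*c + (-1)*q^8*c + q^12*c^3 + q^14*c^3 + q^18*c^5 + q^20*c^5 + (-1)*q^24*c^7 + (-1)*q^26*c^7) • (a * w * (Pt q a 2 z))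
      + (q^8*c^2 + q^10*c^2 + (-1)*q^14*c^4 + (-2)*q^16*c^4 + (-1)*q^18*c^4 + q^22*c^6 + q^24*c^6) • (w * a * (Pt q a 2 z))
      + (q^10*c^2 + q^12*c^2 + (-1)*q^14*c^4 + (-2)*q^16*c^4 + (-1)*q^18*c^4 + q^20*c^6 + q^22*c^6) • (w * (Pt q a 2 z) * a) := by
  simp only [Pt_two, Tt, Uh]
  simp only [mul_add, add_mul, mul_sub, sub_mul, smul_add, smul_sub, smul_smul,
    smul_mul_assoc, mul_smul_comm, pow_two, mul_assoc]
  match_scalars <;> ring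

/-- The single `bad` step is a scalar multiple of the clean step `Tt`. -/
lemma bad_succ (q : F) (a : A) (hq : q ≠ 0) (m : ℕ) :
    ∃ s : F, ∀ w : A, bad q a (m+1) w = s • Tt ((q^(m+1))^2) a w := by
  have hu : (q:F)^(m+1) ≠ 0 := pow_ne_zero _ hq
  have e6 : q ^ ((m:ℤ) + 1) = q^(m+1) := by
    rw [show ((m:ℤ) + 1) = ((m+1 : ℕ) : ℤ) by push_cast; ring, zpow_natCast]
  have e7 : q ^ (-((m:ℤ) + 1)) = (q^(m+1))⁻¹ := by rw [zpow_neg, e6]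
  have e1 : q ^ (2 * ((m:ℤ) + 1)) = (q^(m+1))^2 := by
    rw [show (2 * ((m:ℤ) + 1)) = ((2*(m+1) : ℕ) : ℤ) by push_cast; ring, zpow_natCast,
      show 2*(m+1) = (m+1)*2 by ring, pow_mul]
  have e2 : q ^ (-(2 * ((m:ℤ) + 1))) = ((q^(m+1))^2)⁻¹ := by rw [zpow_neg, e1]
  refine ⟨(((q^(m+1))^2 - ((q^(m+1))^2)⁻¹) *
      (q ^ (2 * ((m:ℤ) + 1) + 1) - q ^ (-(2 * ((m:ℤ) + 1)) - 1)))⁻¹ * ((((q^(m+1)):F)^2)^2)⁻¹,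
    fun w => ?_⟩
  show bad q a (m+1) w = _
  simp only [bad, qad, neg_neg, e1, e2, e6, e7]
  generalize (((q^(m+1))^2 - ((q^(m+1))^2)⁻¹) *
      (q ^ (2 * ((m:ℤ) + 1) + 1) - q ^ (-(2 * ((m:ℤ) + 1)) - 1)) : F)⁻¹ = G
  simp only [smul_sub, smul_add, mul_sub, sub_mul, mul_add, add_mul, mul_smul_comm,
    smul_mul_assoc, smul_smul, mul_assoc]
  simp only [Tt, smul_add, smul_sub, smul_smul, one_smul, pow_two, mul_assoc]
  match_scalars <;> (field_simp; try ring)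

lemma qad_smul (q : F) (a : A) (r : ℤ) (s : F) (y : A) :
    qad q a r (s • y) = s • qad q a r y := by
  simp only [qad, mul_smul_comm, smul_mul_assoc, smul_sub, smul_smul, mul_comm]

lemma bad_smul (q : F) (a : A) (m : ℕ) (s : F) (y : A) :
    bad q a m (s • y) = s • bad q a m y := by
  cases m with
  | zero => simp only [bad, qad_smul, smul_smul, mul_comm]
  | succ m =>
      simp only [bad, qad_smul, smul_add, smul_smul]
      match_scalars <;> ring

/-- `badProd` is a scalar multiple of the clean product `Pt`. -/
lemma badProd_eq_Pt (q : F) (a : A) (hq : q ≠ 0) :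
    ∀ m : ℕ, ∃ s : F, ∀ y : A, badProd q a m y = s • Pt q a m y := by
  intro m
  induction m with
  | zero => exact ⟨1, fun y => (one_smul F y).symm⟩
  | succ m ih =>
      obtain ⟨s, hs⟩ := ih
      cases m with
      | zero =>
          refine ⟨(q - q⁻¹)⁻¹, fun y => ?_⟩
          show bad q a 0 (badProd q a 0 y) = _
          simp only [badProd, id, bad, qad, neg_zero, zpow_zero, one_smul]
          rfl
      | succ k =>
          obtain ⟨t, ht⟩ := bad_succ q a hq k
          refine ⟨s * t, fun y => ?_⟩
          have hpow : ((q:F)^(k+1))^2 = q^(2*(k+1)) := by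
            rw [show 2*(k+1) = (k+1)*2 by ring, pow_mul]
          show bad q a (k+1) (badProd q a (k+1) y) = _
          rw [hs, bad_smul, ht, hpow, smul_smul]
          rfl

section Main

variable (q : F) (a x : A)

/-- The inductive transfer: multiplying by an element `x` with `Pt 2 x = 0`. -/
lemma key (hx : Pt q a 2 x = 0) :
    ∀ (m : ℕ) (y : A), (q^4*(q^4-1)^2) • Pt q a (m+2) (y*x) =
      Uh q (q^(2*m)) a (Pt q a (m+1) y) x := by
  intro m
  induction m with
  | zero =>
      intro y
      have h := eid1 q a y x
      rw [hx, mul_zero, smul_zero, add_zero] at h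
      simpa [Pt] using h
  | succ m ih =>
      intro y
      have p1 : (q:F)^2 * q^(2*m) = q^(2*(m+1)) := by
        rw [← pow_add]; congr 1; ring
      have p2 : (q:F)^4 * q^(2*m) = q^(2*(m+2)) := by
        rw [← pow_add]; congr 1; ring
      have h2 := eid2 q (q^(2*m)) a (Pt q a (m+1) y) x
      rw [hx] at h2
      simp only [mul_zero, zero_mul, smul_zero, add_zero] at h2
      rw [p1, p2] at h2
      have : Pt q a (m+1+2) (y*x) = Tt (q^(2*(m+2))) a (Pt q a (m+2) (y*x)) := rfl
      rw [this, ← Tt_smul, ih y, ← h2]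
      rfl

lemma Pt_pow (hq : q ≠ 0) (hroot : ∀ n : ℕ, 0 < n → q ^ n ≠ 1) (hx : Pt q a 2 x = 0) :
    ∀ r : ℕ, 1 ≤ r → Pt q a (r + 1) (x ^ r) = 0 := by
  have hσ : (q:F)^4*(q^4-1)^2 ≠ 0 :=
    mul_ne_zero (pow_ne_zero 4 hq)
      (pow_ne_zero 2 (sub_ne_zero.mpr (hroot 4 (by norm_num))))
  intro r hr
  induction r with
  | zero => omega
  | succ r ih =>
      rcases Nat.eq_or_lt_of_le hr with h1 | h1
      · rw [← h1, pow_one]; exact hx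
      · have hr' : 1 ≤ r := by omega
        have hprev := ih hr'
        have h := key q a x hx r (x ^ r)
        rw [hprev, Uh_zero, ← pow_succ] at h
        rcases smul_eq_zero.mp h with h' | h'
        · exact absurd h' hσ
        · exact h'

end Main

theorem stmt13 (q : F) (hq : q ≠ 0) (hroot : ∀ n : ℕ, 0 < n → q ^ n ≠ 1) (a : A) (x : A)
    (hdg : a ^ 3 * x - ((q ^ (3 : ℤ) - q ^ (-3 : ℤ)) / (q - q⁻¹)) • (a ^ 2 * x * a) +
        ((q ^ (3 : ℤ) - q ^ (-3 : ℤ)) / (q - q⁻¹)) • (a * x * a ^ 2) - x * a ^ 3 =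
      ((q ^ (2 : ℤ) - q ^ (-2 : ℤ)) ^ 2) • (x * a - a * x)) :
    badProd q a 2 x = 0 ∧ ∀ r : ℕ, 1 ≤ r → badProd q a (r + 1) (x ^ r) = 0 := by
  have hqq : q - q⁻¹ ≠ 0 := by
    intro h
    apply hroot 2 (by norm_num)
    have e : q * (q - q⁻¹) = q^2 - 1 := by field_simp
    rw [h, mul_zero] at e
    exact sub_eq_zero.mp e.symm
  have z3 : (q ^ (3:ℤ) : F) = q^3 := by norm_cast
  have zm3 : (q ^ (-3:ℤ) : F) = (q^3)⁻¹ := by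
    rw [show (-3:ℤ) = -(3:ℤ) by norm_num, zpow_neg, z3]
  have z2 : (q ^ (2:ℤ) : F) = q^2 := by norm_cast
  have zm2 : (q ^ (-2:ℤ) : F) = (q^2)⁻¹ := by
    rw [show (-2:ℤ) = -(2:ℤ) by norm_num, zpow_neg, z2]
  rw [z3, zm3, z2, zm2] at hdg
  have h21 : (q:F)^2 - 1 ≠ 0 := sub_ne_zero.mpr (hroot 2 (by norm_num))
  have h53 : (-q^3 + q^5 : F) ≠ 0 := by
    have e : (-q^3 + q^5 : F) = q^3*(q^2-1) := by ring
    rw [e]; exact mul_ne_zero (pow_ne_zero 3 hq) h21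
  have s1 : ((q^3 - (q^3)⁻¹)/(q - q⁻¹) : F) = (q^4+q^2+1)/q^2 := by
    rw [div_eq_div_iff hqq (pow_ne_zero 2 hq)]
    field_simp
    ring
  have s2 : ((q^2 - (q^2)⁻¹)^2 : F) = (q^4-1)^2/q^4 := by
    field_simp
  rw [s1, s2] at hdg
  -- the crucial part 1 : Pt 2 x = 0
  have hx : Pt q a 2 x = 0 := by
    have key0 : Pt q a 2 x =
        (q^4) • ((a ^ 3 * x - ((q^4+q^2+1)/q^2) • (a ^ 2 * x * a) +
          ((q^4+q^2+1)/q^2) • (a * x * a ^ 2) - x * a ^ 3) -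
          ((q^4-1)^2/q^4) • (x * a - a * x)) := by
      simp only [Pt_two, Tt]
      simp only [mul_add, add_mul, mul_sub, sub_mul, smul_add, smul_sub, smul_smul,
        smul_mul_assoc, mul_smul_comm, pow_succ, pow_zero, one_mul, mul_assoc]
      match_scalars <;> (field_simp; try ring)
    rw [key0, hdg, sub_self, smul_zero]
  constructor
  · obtain ⟨s, hs⟩ := badProd_eq_Pt q a hq 2
    rw [hs, hx, smul_zero]
  · intro r hr
    obtain ⟨s, hs⟩ := badProd_eq_Pt q a hq (r+1)
    rw [hs, Pt_pow q a x hq hroot hx r hr, smul_zero]
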